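/- For any periodic sequences S, Q ⊆ ℝ, Elm(S,Q) = 0 if and only if there exist t ∈ ℝ and ε ∈ {1, −1} with Q = {ε·x + t : x ∈ S}, i.e. the unoriented elastic metric satisfies the first metric axiom on isometry classes of periodic sequences. -/

import Mathlib

/-- A periodic sequence in `ℝ` with an `m`-point motif `p` and period `l`:
the set `{p i + l * j : i ∈ Fin m, j ∈ ℤ}` where `0 ≤ p 0 < p 1 < ⋯ < p (m-1) < l`. -/
structure PSeq (m : ℕ) where
  m_pos : 0 < m
  l : ℝ
  l_pos : 0 < l
  p : Fin m → ℝ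
  p_strict : StrictMono p
  p0_nonneg : 0 ≤ p ⟨0, m_pos⟩
  p_lt : ∀ i, p i < l

namespace PSeq

variable {m : ℕ}

/-- The set of points of the periodic sequence. -/
def pts (S : PSeq m) : Set ℝ := {x | ∃ (i : Fin m) (j : ℤ), x = S.p i + S.l * j}

/-- The period is minimal: the same set of points cannot be produced with a smaller period. -/
def IsMinimal (S : PSeq m) : Prop := ∀ (m' : ℕ) (T : PSeq m'), T.pts = S.pts → S.l ≤ T.l

/-- The distance list `D` of the periodic sequence, indexed by `ZMod m`:
`D i = p (i+1) - p i` for `i < m - 1`, and `D (m-1) = (p 0 + l) - p (m-1)`. -/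
noncomputable def D (S : PSeq m) : ZMod m → ℝ := fun i =>
  letI : NeZero m := ⟨S.m_pos.ne'⟩
  if h : i.val + 1 < m then S.p ⟨i.val + 1, h⟩ - S.p ⟨i.val, i.val_lt⟩
  else S.p ⟨0, S.m_pos⟩ + S.l - S.p ⟨i.val, i.val_lt⟩

end PSeq

/-- The cyclic shift `σ_s` acting on vectors indexed by `ZMod n`: `(σ_s v) i = v (i + s)`. -/
def shiftVec {n : ℕ} (s : ZMod n) (v : ZMod n → ℝ) : ZMod n → ℝ := fun i => v (i + s)

/-- The reversal `ρ`: `(ρ v) i = v (m - 1 - i)` (note `m - 1 = -1` in `ZMod m`). -/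
def revVec {n : ℕ} (v : ZMod n → ℝ) : ZMod n → ℝ := fun i => v (-1 - i)

/-- The Minkowski sup-norm `‖v‖_∞ = max_i |v i|` of a vector indexed by `ZMod n`, `n > 0`. -/
noncomputable def supNorm {n : ℕ} (hn : 0 < n) (v : ZMod n → ℝ) : ℝ :=
  letI : NeZero n := ⟨hn.ne'⟩
  Finset.univ.sup' (Finset.univ_nonempty_iff.mpr ⟨0⟩) fun i => |v i|

namespace PSeq

/-- The distance list of the multiple `(n / m) S` of a periodic sequence `S` with `m ∣ n`,
i.e. the `(n/m)`-fold concatenation of `D S`, indexed by `ZMod n`. -/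
noncomputable def Dc {m : ℕ} (S : PSeq m) (n : ℕ) : ZMod n → ℝ :=
  fun i => S.D ((i.val : ZMod m))

/-- The oriented elastic metric `Elm^o(S,Q)`: with `n = lcm(m₁, m₂)`, the minimum over all
cyclic shifts `s ∈ ZMod n` of `‖D((n/m₁)S) - σ_s(D((n/m₂)Q))‖_∞`. -/
noncomputable def Elmo {m₁ m₂ : ℕ} (S : PSeq m₁) (Q : PSeq m₂) : ℝ :=
  letI : NeZero (Nat.lcm m₁ m₂) := ⟨(Nat.lcm_pos S.m_pos Q.m_pos).ne'⟩
  Finset.univ.inf' (Finset.univ_nonempty_iff.mpr ⟨0⟩)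
    fun s : ZMod (Nat.lcm m₁ m₂) =>
      supNorm (Nat.lcm_pos S.m_pos Q.m_pos)
        fun i => S.Dc (Nat.lcm m₁ m₂) i - shiftVec s (Q.Dc (Nat.lcm m₁ m₂)) i

/-- The unoriented elastic metric `Elm(S,Q)`: the minimum over all `2n` permutations
`σ_s` and `σ_s ∘ ρ` of `‖D((n/m₁)S) - σ(D((n/m₂)Q))‖_∞`, where `n = lcm(m₁, m₂)`. -/
noncomputable def Elm {m₁ m₂ : ℕ} (S : PSeq m₁) (Q : PSeq m₂) : ℝ :=
  letI : NeZero (Nat.lcm m₁ m₂) := ⟨(Nat.lcm_pos S.m_pos Q.m_pos).ne'⟩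
  min
    (Finset.univ.inf' (Finset.univ_nonempty_iff.mpr ⟨0⟩)
      fun s : ZMod (Nat.lcm m₁ m₂) =>
        supNorm (Nat.lcm_pos S.m_pos Q.m_pos)
          fun i => S.Dc (Nat.lcm m₁ m₂) i - shiftVec s (Q.Dc (Nat.lcm m₁ m₂)) i)
    (Finset.univ.inf' (Finset.univ_nonempty_iff.mpr ⟨0⟩)
      fun s : ZMod (Nat.lcm m₁ m₂) =>
        supNorm (Nat.lcm_pos S.m_pos Q.m_pos)
          fun i => S.Dc (Nat.lcm m₁ m₂) i - shiftVec s (revVec (Q.Dc (Nat.lcm m₁ m₂))) i)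

end PSeq



namespace PSeq
variable {m : ℕ}

noncomputable def phi (S : PSeq m) : ℤ → ℝ := fun k =>
  letI : NeZero m := ⟨S.m_pos.ne'⟩
  S.p ⟨(k : ZMod m).val, ZMod.val_lt _⟩ + S.l * ((k / (m : ℤ) : ℤ) : ℝ)

lemma phi_gap (S : PSeq m) (k : ℤ) : S.phi (k + 1) - S.phi k = S.D ((k : ℤ) : ZMod m) := by
  haveI : NeZero m := ⟨S.m_pos.ne'⟩
  have hm : (0:ℤ) < m := by exact_mod_cast S.m_pos
  have hval : ((k : ZMod m).val : ℤ) = k % m := ZMod.val_intCast k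
  have hval1 : (((k+1 : ℤ) : ZMod m).val : ℤ) = (k+1) % m := ZMod.val_intCast _
  have hr0 : 0 ≤ k % m := Int.emod_nonneg k hm.ne'
  have hrm : k % m < m := Int.emod_lt_of_pos k hm
  have hk : k % m + (m:ℤ) * (k / m) = k := Int.emod_add_mul_ediv k m
  unfold PSeq.D PSeq.phi
  by_cases h : (k : ZMod m).val + 1 < m
  · rw [dif_pos h]
    have h' : k % m + 1 < m := by omega
    have e1 : (k+1) % m = k % m + 1 := by
      have : k + 1 = (k % m + 1) + (m:ℤ) * (k / m) := by omega
      rw [this, Int.add_mul_emod_self_left, Int.emod_eq_of_lt (by omega) h']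
    have e2 : (k+1) / m = k / m := by
      have : k + 1 = (k % m + 1) + (m:ℤ) * (k / m) := by omega
      rw [this, Int.add_mul_ediv_left _ _ hm.ne', Int.ediv_eq_zero_of_lt (by omega) h', zero_add]
    have hp : S.p ⟨((k+1 : ℤ) : ZMod m).val, ZMod.val_lt _⟩ = S.p ⟨(k:ZMod m).val + 1, h⟩ :=
      congrArg S.p (Fin.ext (show ((k+1 : ℤ) : ZMod m).val = (k:ZMod m).val + 1 by omega))
    rw [hp, e2]
    ring
  · rw [dif_neg h]
    have hr : k % m = m - 1 := by omega
    have e1 : (k+1) % m = 0 := by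
      have : k + 1 = (m:ℤ) * (k / m + 1) := by rw [mul_add]; omega
      rw [this, Int.mul_emod_right]
    have e2 : (k+1) / m = k / m + 1 := by
      have : k + 1 = (m:ℤ) * (k / m + 1) := by rw [mul_add]; omega
      rw [this, Int.mul_ediv_cancel_left _ hm.ne']
    have hp : S.p ⟨((k+1 : ℤ) : ZMod m).val, ZMod.val_lt _⟩ = S.p ⟨0, S.m_pos⟩ :=
      congrArg S.p (Fin.ext (show ((k+1 : ℤ) : ZMod m).val = 0 by omega))
    rw [hp, e2]
    push_cast
    ring

lemma D_pos (S : PSeq m) (i : ZMod m) :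
    letI : NeZero m := ⟨S.m_pos.ne'⟩
    0 < S.D i := by
  haveI : NeZero m := ⟨S.m_pos.ne'⟩
  unfold PSeq.D
  by_cases h : i.val + 1 < m
  · rw [dif_pos h]
    have := S.p_strict (show (⟨i.val, i.val_lt⟩ : Fin m) < ⟨i.val+1, h⟩ from by simp)
    linarith
  · rw [dif_neg h]
    have h1 := S.p_lt ⟨i.val, i.val_lt⟩
    have h2 := S.p0_nonneg
    linarith

lemma phi_strictMono (S : PSeq m) : StrictMono S.phi := by
  apply strictMono_int_of_lt_succ
  intro k
  have := S.D_pos ((k : ℤ) : ZMod m)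
  have hg := S.phi_gap k
  linarith [hg ▸ this]

lemma range_phi (S : PSeq m) : Set.range S.phi = S.pts := by
  haveI : NeZero m := ⟨S.m_pos.ne'⟩
  have hm : (0:ℤ) < m := by exact_mod_cast S.m_pos
  ext x
  constructor
  · rintro ⟨k, rfl⟩
    exact ⟨⟨(k : ZMod m).val, ZMod.val_lt _⟩, k / m, rfl⟩
  · rintro ⟨i, j, rfl⟩
    refine ⟨(i : ℤ) + m * j, ?_⟩
    unfold PSeq.phi
    have e1 : ((i : ℤ) + m * j) % m = i := by
      rw [Int.add_mul_emod_self_left, Int.emod_eq_of_lt (by positivity) (by exact_mod_cast i.2)]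
    have e2 : ((i : ℤ) + m * j) / m = j := by
      rw [Int.add_mul_ediv_left _ _ hm.ne', Int.ediv_eq_zero_of_lt (by positivity) (by exact_mod_cast i.2), zero_add]
    have hv : (((i : ℤ) + m * j : ℤ) : ZMod m).val = i := by
      have := ZMod.val_intCast (n := m) ((i : ℤ) + m * j)
      omega
    rw [e2, show (⟨(((i : ℤ) + m * j : ℤ) : ZMod m).val, ZMod.val_lt _⟩ : Fin m) = i from Fin.ext hv]

end PSeq

lemma supNorm_nonneg {n : ℕ} (hn : 0 < n) (v : ZMod n → ℝ) : 0 ≤ supNorm hn v := by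
  haveI : NeZero n := ⟨hn.ne'⟩
  unfold supNorm
  exact le_trans (abs_nonneg (v 0)) (Finset.le_sup' (fun i => |v i|) (Finset.mem_univ (0 : ZMod n)))

lemma supNorm_eq_zero_iff {n : ℕ} (hn : 0 < n) (v : ZMod n → ℝ) :
    supNorm hn v = 0 ↔ ∀ i, v i = 0 := by
  haveI : NeZero n := ⟨hn.ne'⟩
  unfold supNorm
  constructor
  · intro h i
    have h1 : |v i| ≤ 0 := h ▸ Finset.le_sup' (fun i => |v i|) (Finset.mem_univ i)
    exact abs_eq_zero.mp (le_antisymm h1 (abs_nonneg _))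
  · intro h
    apply le_antisymm
    · exact Finset.sup'_le _ _ fun i _ => by rw [h i]; simp
    · exact le_trans (abs_nonneg (v 0))
        (Finset.le_sup' (fun i => |v i|) (Finset.mem_univ (0 : ZMod n)))

namespace PSeq

lemma Elm_eq_zero_iff_exists {m₁ m₂ : ℕ} (S : PSeq m₁) (Q : PSeq m₂) :
    PSeq.Elm S Q = 0 ↔
      ((∃ s : ZMod (Nat.lcm m₁ m₂), ∀ i, S.Dc (Nat.lcm m₁ m₂) i = Q.Dc (Nat.lcm m₁ m₂) (i + s)) ∨
      (∃ s : ZMod (Nat.lcm m₁ m₂), ∀ i, S.Dc (Nat.lcm m₁ m₂) i = Q.Dc (Nat.lcm m₁ m₂) (-1 - s - i))) := by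
  haveI : NeZero (Nat.lcm m₁ m₂) := ⟨(Nat.lcm_pos S.m_pos Q.m_pos).ne'⟩
  have hnpos : 0 < Nat.lcm m₁ m₂ := Nat.lcm_pos S.m_pos Q.m_pos
  have hne : (Finset.univ : Finset (ZMod (Nat.lcm m₁ m₂))).Nonempty :=
    Finset.univ_nonempty_iff.mpr ⟨0⟩
  unfold PSeq.Elm
  constructor
  · intro h
    have h0 : ∀ s : ZMod (Nat.lcm m₁ m₂), 0 ≤ supNorm hnpos
        (fun i => S.Dc (Nat.lcm m₁ m₂) i - shiftVec s (Q.Dc (Nat.lcm m₁ m₂)) i) :=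
      fun s => supNorm_nonneg _ _
    have h0' : ∀ s : ZMod (Nat.lcm m₁ m₂), 0 ≤ supNorm hnpos
        (fun i => S.Dc (Nat.lcm m₁ m₂) i - shiftVec s (revVec (Q.Dc (Nat.lcm m₁ m₂))) i) :=
      fun s => supNorm_nonneg _ _
    rcases min_eq_iff.mp h with ⟨hmin, -⟩ | ⟨hmin, -⟩
    · left
      obtain ⟨s, -, hs⟩ := Finset.exists_mem_eq_inf' hne
        (fun s : ZMod (Nat.lcm m₁ m₂) => supNorm hnpos
          (fun i => S.Dc (Nat.lcm m₁ m₂) i - shiftVec s (Q.Dc (Nat.lcm m₁ m₂)) i))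
      refine ⟨s, fun i => ?_⟩
      have := (supNorm_eq_zero_iff hnpos _).mp (by rw [← hs, ← hmin] ) i
      have := sub_eq_zero.mp this
      simpa [shiftVec] using this
    · right
      obtain ⟨s, -, hs⟩ := Finset.exists_mem_eq_inf' hne
        (fun s : ZMod (Nat.lcm m₁ m₂) => supNorm hnpos
          (fun i => S.Dc (Nat.lcm m₁ m₂) i - shiftVec s (revVec (Q.Dc (Nat.lcm m₁ m₂))) i))
      refine ⟨s, fun i => ?_⟩
      have := (supNorm_eq_zero_iff hnpos _).mp (by rw [← hs, ← hmin]) i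
      have := sub_eq_zero.mp this
      simpa [shiftVec, revVec, sub_sub, add_comm i s] using this
  · intro h
    have hle : ∀ s : ZMod (Nat.lcm m₁ m₂), ∀ v : ZMod (Nat.lcm m₁ m₂) → ℝ, True := fun _ _ => trivial
    apply le_antisymm
    · rcases h with ⟨s, hs⟩ | ⟨s, hs⟩
      · apply min_le_of_left_le
        refine le_trans (Finset.inf'_le _ (Finset.mem_univ s)) ?_
        rw [(supNorm_eq_zero_iff hnpos _).mpr fun i => by
          simpa [shiftVec, sub_eq_zero] using hs i]
      · apply min_le_of_right_le
        refine le_trans (Finset.inf'_le _ (Finset.mem_univ s)) ?_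
        rw [(supNorm_eq_zero_iff hnpos _).mpr fun i => by
          simpa [shiftVec, revVec, sub_sub, sub_eq_zero, add_comm s i] using hs i]
    · apply le_min
      · exact Finset.le_inf' _ _ fun s _ => supNorm_nonneg _ _
      · exact Finset.le_inf' _ _ fun s _ => supNorm_nonneg _ _

end PSeq

lemma cast_helper {m n : ℕ} [NeZero n] (hm : m ∣ n) (k : ℤ) :
    (((k : ZMod n).val : ℤ) : ZMod m) = (k : ZMod m) := by
  rw [ZMod.val_intCast, ZMod.intCast_eq_intCast_iff]
  exact Int.emod_emod_of_dvd k (Int.natCast_dvd_natCast.mpr hm)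

lemma self_cast {n : ℕ} [NeZero n] (i : ZMod n) : ((i.val : ℤ) : ZMod n) = i := by
  simp [ZMod.natCast_val, ZMod.cast_id]

lemma exists_shift {f g : ℤ → ℝ} (hf : StrictMono f) (hg : StrictMono g)
    (h : Set.range f = Set.range g) : ∃ a : ℤ, ∀ k : ℤ, g (k + a) = f k := by
  obtain ⟨a, ha⟩ : f 0 ∈ Set.range g := h ▸ Set.mem_range_self 0
  refine ⟨a, fun k => ?_⟩
  have step : ∀ k : ℤ, g (k + a) = f k → g (k + 1 + a) = f (k + 1) := by
    intro k hk
    obtain ⟨j, hj⟩ : f (k+1) ∈ Set.range g := h ▸ Set.mem_range_self _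
    obtain ⟨i, hi⟩ : g (k+a+1) ∈ Set.range f := h.symm ▸ Set.mem_range_self _
    have hj1 : k + a < j := hg.lt_iff_lt.mp (by rw [hj, hk]; exact hf (lt_add_one k))
    have hi1 : k < i := hf.lt_iff_lt.mp (by rw [hi, ← hk]; exact hg (lt_add_one _))
    have h1 : g (k+a+1) ≤ f (k+1) := by rw [← hj]; exact hg.monotone (by omega)
    have h2 : f (k+1) ≤ g (k+a+1) := by rw [← hi]; exact hf.monotone (by omega)
    have : g (k + a + 1) = f (k+1) := le_antisymm h1 h2
    rw [← this]; ring_nf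
  have step' : ∀ k : ℤ, g (k + a) = f k → g (k - 1 + a) = f (k - 1) := by
    intro k hk
    obtain ⟨j, hj⟩ : f (k-1) ∈ Set.range g := h ▸ Set.mem_range_self _
    obtain ⟨i, hi⟩ : g (k+a-1) ∈ Set.range f := h.symm ▸ Set.mem_range_self _
    have hj1 : j < k + a := hg.lt_iff_lt.mp (by rw [hj, hk]; exact hf (by omega))
    have hi1 : i < k := hf.lt_iff_lt.mp (by rw [hi, ← hk]; exact hg (by omega))
    have h1 : f (k-1) ≤ g (k+a-1) := by rw [← hj]; exact hg.monotone (by omega)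
    have h2 : g (k+a-1) ≤ f (k-1) := by rw [← hi]; exact hf.monotone (by omega)
    have : g (k + a - 1) = f (k-1) := le_antisymm h2 h1
    rw [← this]; ring_nf
  induction k using Int.induction_on with
  | zero => simpa using ha
  | succ k ih => exact step k ih
  | pred k ih => simpa using step' (-k) (by simpa using ih)

lemma const_of_step {f : ℤ → ℝ} (h : ∀ k, f (k + 1) = f k) : ∀ k, f k = f 0 := by
  intro k
  induction k using Int.induction_on with
  | zero => rfl
  | succ k ih => rw [h k, ih]
  | pred k ih => rw [← ih, ← h (-(k:ℤ) - 1)]; ring_nf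

namespace PSeq

lemma Dc_intCast {m n : ℕ} [NeZero n] (S : PSeq m) (hm : m ∣ n) (k : ℤ) :
    S.Dc n ((k : ℤ) : ZMod n) = S.D ((k : ZMod m)) := by
  unfold PSeq.Dc
  congr 1
  exact_mod_cast cast_helper hm k

end PSeq

/-- the unoriented elastic metric vanishes exactly on pairs of periodic
sequences related by an isometry of `ℝ` (first metric axiom on isometry classes). -/
theorem Elm_eq_zero_iff_isometry {m₁ m₂ : ℕ} (S : PSeq m₁) (Q : PSeq m₂) :
    PSeq.Elm S Q = 0 ↔
      ∃ (t ε : ℝ), (ε = 1 ∨ ε = -1) ∧ Q.pts = (fun x => ε * x + t) '' S.pts := by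
  haveI : NeZero (Nat.lcm m₁ m₂) := ⟨(Nat.lcm_pos S.m_pos Q.m_pos).ne'⟩
  have hd1 : m₁ ∣ Nat.lcm m₁ m₂ := Nat.dvd_lcm_left _ _
  have hd2 : m₂ ∣ Nat.lcm m₁ m₂ := Nat.dvd_lcm_right _ _
  rw [PSeq.Elm_eq_zero_iff_exists]
  constructor
  · rintro (⟨s, hs⟩ | ⟨s, hs⟩)
    · -- pure translation
      set a : ℤ := (s.val : ℤ) with ha
      have hD : ∀ k : ℤ, S.D ((k : ZMod m₁)) = Q.D (((k + a : ℤ) : ZMod m₂)) := by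
        intro k
        have h1 := hs ((k : ℤ) : ZMod (Nat.lcm m₁ m₂))
        rw [PSeq.Dc_intCast S hd1] at h1
        have h2 : ((k : ℤ) : ZMod (Nat.lcm m₁ m₂)) + s
            = (((k + a : ℤ)) : ZMod (Nat.lcm m₁ m₂)) := by
          rw [Int.cast_add, ha, self_cast]
        rw [h2, PSeq.Dc_intCast Q hd2] at h1
        exact h1
      have hstep : ∀ k : ℤ,
          (fun k => Q.phi (k + a) - S.phi k) (k + 1) = (fun k => Q.phi (k + a) - S.phi k) k := by
        intro k
        simp only
        have g1 := Q.phi_gap (k + a)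
        have g2 := S.phi_gap k
        have hDk := hD k
        have e : k + 1 + a = (k + a) + 1 := by ring
        rw [e]
        linarith
      have hconst := const_of_step (f := fun k => Q.phi (k + a) - S.phi k) hstep
      refine ⟨Q.phi (0 + a) - S.phi 0, 1, Or.inl rfl, ?_⟩
      rw [← S.range_phi, ← Q.range_phi]
      ext x
      simp only [Set.mem_range, Set.mem_image, one_mul]
      constructor
      · rintro ⟨k, rfl⟩
        refine ⟨S.phi (k - a), ⟨k - a, rfl⟩, ?_⟩
        have hc := hconst (k - a)
        have e : k - a + a = k := by ring
        rw [e] at hc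
        linarith
      · rintro ⟨y, ⟨k, rfl⟩, rfl⟩
        refine ⟨k + a, ?_⟩
        have hc := hconst k
        linarith
    · -- reflection
      set c : ℤ := (((-1 - s : ZMod (Nat.lcm m₁ m₂))).val : ℤ) with hc
      have hD : ∀ k : ℤ, S.D ((k : ZMod m₁)) = Q.D (((c - k : ℤ) : ZMod m₂)) := by
        intro k
        have h1 := hs ((k : ℤ) : ZMod (Nat.lcm m₁ m₂))
        rw [PSeq.Dc_intCast S hd1] at h1
        have h2 : -1 - s - ((k : ℤ) : ZMod (Nat.lcm m₁ m₂))
            = (((c - k : ℤ)) : ZMod (Nat.lcm m₁ m₂)) := by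
          rw [Int.cast_sub, hc, self_cast]
        rw [h2, PSeq.Dc_intCast Q hd2] at h1
        exact h1
      have hstep : ∀ k : ℤ,
          (fun k => Q.phi (c + 1 - k) + S.phi k) (k + 1)
            = (fun k => Q.phi (c + 1 - k) + S.phi k) k := by
        intro k
        simp only
        have g1 := Q.phi_gap (c - k)
        have g2 := S.phi_gap k
        have hDk := hD k
        have e1 : c + 1 - (k + 1) = c - k := by ring
        have e2 : c + 1 - k = (c - k) + 1 := by ring
        rw [e1, e2]
        linarith
      have hconst := const_of_step (f := fun k => Q.phi (c + 1 - k) + S.phi k) hstep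
      refine ⟨Q.phi (c + 1 - 0) + S.phi 0, -1, Or.inr rfl, ?_⟩
      rw [← S.range_phi, ← Q.range_phi]
      ext x
      simp only [Set.mem_range, Set.mem_image]
      constructor
      · rintro ⟨k, rfl⟩
        refine ⟨S.phi (c + 1 - k), ⟨c + 1 - k, rfl⟩, ?_⟩
        have hcc := hconst (c + 1 - k)
        have e : c + 1 - (c + 1 - k) = k := by ring
        rw [e] at hcc
        linarith
      · rintro ⟨y, ⟨k, rfl⟩, rfl⟩
        refine ⟨c + 1 - k, ?_⟩
        have hcc := hconst k
        linarith
  · rintro ⟨t, ε, hε | hε, hQ⟩ <;> subst hε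
    · -- translation
      have hf : StrictMono (fun k : ℤ => S.phi k + t) := fun k₁ k₂ h => by
        simpa using add_lt_add_right (S.phi_strictMono h) t
      have hrange : Set.range (fun k : ℤ => S.phi k + t) = Set.range Q.phi := by
        rw [Q.range_phi, hQ, ← S.range_phi]
        ext x
        simp only [Set.mem_range, Set.mem_image, one_mul]
        constructor
        · rintro ⟨k, rfl⟩
          exact ⟨S.phi k, ⟨k, rfl⟩, rfl⟩
        · rintro ⟨y, ⟨k, rfl⟩, rfl⟩
          exact ⟨k, rfl⟩
      obtain ⟨a, hA⟩ := exists_shift hf Q.phi_strictMono hrange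
      have hD : ∀ k : ℤ, Q.D (((k + a : ℤ) : ZMod m₂)) = S.D ((k : ZMod m₁)) := by
        intro k
        rw [← Q.phi_gap (k + a), ← S.phi_gap k]
        have h1 := hA k
        have h2 := hA (k + 1)
        have e : k + 1 + a = (k + a) + 1 := by ring
        rw [e] at h2
        linarith
      left
      refine ⟨((a : ℤ) : ZMod (Nat.lcm m₁ m₂)), fun i => ?_⟩
      calc S.Dc _ i = S.D (((i.val : ℤ) : ZMod m₁)) := by
            rw [← PSeq.Dc_intCast S hd1, self_cast]
        _ = Q.D ((((i.val : ℤ) + a : ℤ) : ZMod m₂)) := (hD _).symm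
        _ = Q.Dc _ ((((i.val : ℤ) + a : ℤ) : ZMod (Nat.lcm m₁ m₂))) :=
            (PSeq.Dc_intCast Q hd2 _).symm
        _ = Q.Dc _ (i + ((a : ℤ) : ZMod (Nat.lcm m₁ m₂))) := by
            rw [Int.cast_add, self_cast]
    · -- reflection
      have hf : StrictMono (fun k : ℤ => -(S.phi (-k)) + t) := fun k₁ k₂ h => by
        have : S.phi (-k₂) < S.phi (-k₁) := S.phi_strictMono (by omega)
        show -(S.phi (-k₁)) + t < -(S.phi (-k₂)) + t
        linarith
      have hrange : Set.range (fun k : ℤ => -(S.phi (-k)) + t) = Set.range Q.phi := by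
        rw [Q.range_phi, hQ, ← S.range_phi]
        ext x
        simp only [Set.mem_range, Set.mem_image]
        constructor
        · rintro ⟨k, rfl⟩
          exact ⟨S.phi (-k), ⟨-k, rfl⟩, by ring⟩
        · rintro ⟨y, ⟨k, rfl⟩, rfl⟩
          exact ⟨-k, by rw [neg_neg]; ring⟩
      obtain ⟨a, hA⟩ := exists_shift hf Q.phi_strictMono hrange
      have hD : ∀ j : ℤ, S.D ((j : ZMod m₁)) = Q.D (((a - 1 - j : ℤ) : ZMod m₂)) := by
        intro j
        rw [← S.phi_gap j, ← Q.phi_gap (a - 1 - j)]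
        have h1 := hA (-j)
        have h2 := hA (-j - 1)
        simp only [neg_neg] at h1 h2
        have e1 : -j + a = (a - 1 - j) + 1 := by ring
        have e2 : -j - 1 + a = a - 1 - j := by ring
        have e3 : -(-j - 1) = j + 1 := by ring
        rw [e1] at h1
        rw [e2, e3] at h2
        linarith
      right
      refine ⟨-1 - ((a - 1 : ℤ) : ZMod (Nat.lcm m₁ m₂)), fun i => ?_⟩
      have e : -1 - (-1 - ((a - 1 : ℤ) : ZMod (Nat.lcm m₁ m₂))) - i
          = (((a - 1 - (i.val : ℤ) : ℤ)) : ZMod (Nat.lcm m₁ m₂)) := by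
        have h' : ((a - 1 - (i.val : ℤ) : ℤ) : ZMod (Nat.lcm m₁ m₂))
            = ((a - 1 : ℤ) : ZMod (Nat.lcm m₁ m₂)) - ((i.val : ℤ) : ZMod (Nat.lcm m₁ m₂)) := by
          push_cast
          ring
        rw [h', self_cast]
        ring
      rw [e]
      calc S.Dc _ i = S.D (((i.val : ℤ) : ZMod m₁)) := by
            rw [← PSeq.Dc_intCast S hd1, self_cast]
        _ = Q.D (((a - 1 - (i.val : ℤ) : ℤ) : ZMod m₂)) := hD _
        _ = Q.Dc _ ((((a - 1 - (i.val : ℤ) : ℤ)) : ZMod (Nat.lcm m₁ m₂))) :=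
            (PSeq.Dc_intCast Q hd2 _).symm
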